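/- arXiv:1306.3548 — 2 statements merged into one kernel-verified Lean document; each statement's English description precedes it below -/
import Mathlib

section
/- If for every transition t and every color c, Σ_{p ∈ t•} m_{W(t,p)}(c) = Σ_{p ∈ •t} m_{W(p,t)}(c) (the net is conservative), then the total number of tokens of each color is invariant under execution of any conflict-free firing set without reset arcs. -/
/-- If for every transition `t` and color `c`,
`Σ_{p ∈ t•} m_{W(t,p)}(c) = Σ_{p ∈ •t} m_{W(p,t)}(c)` (the net is conservative), then the
total number of tokens of each color is invariant under execution of any conflict-free
firing set without reset arcs. -/
theorem conservative_total_invariant {P T C : Type*} [Fintype P] [DecidableEq T]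
    (Win : P → T → C → ℕ) (Wout : T → P → C → ℕ)
    (pre : P → T → Prop) [∀ p, DecidablePred (pre p)]
    (post : T → P → Prop) [∀ t, DecidablePred (post t)]
    (hconservative : ∀ (t : T) (c : C),
      (∑ p ∈ Finset.univ.filter (fun p => post t p), Wout t p c)
        = ∑ p ∈ Finset.univ.filter (fun p => pre p t), Win p t c)
    (M M' : P → C → ℕ) (Tk : Finset T)
    (hcf : ∀ (p : P) (c : C),
      (∑ s ∈ Tk.filter (fun s => pre p s), Win p s c) ≤ M p c)
    (hupd : ∀ p c, M' p c =
      M p c - (∑ s ∈ Tk.filter (fun s => pre p s), Win p s c)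
        + (∑ s ∈ Tk.filter (fun s => post s p), Wout s p c)) :
    ∀ c : C, (∑ p : P, M' p c) = ∑ p : P, M p c := by
  intro c
  have key : (∑ p : P, ∑ s ∈ Tk.filter (fun s => post s p), Wout s p c)
      = ∑ p : P, ∑ s ∈ Tk.filter (fun s => pre p s), Win p s c := by
    have h1 : (∑ p : P, ∑ s ∈ Tk.filter (fun s => post s p), Wout s p c)
        = ∑ s ∈ Tk, ∑ p ∈ Finset.univ.filter (fun p => post s p), Wout s p c := by
      simp only [Finset.sum_filter]
      rw [Finset.sum_comm]
    have h2 : (∑ p : P, ∑ s ∈ Tk.filter (fun s => pre p s), Win p s c)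
        = ∑ s ∈ Tk, ∑ p ∈ Finset.univ.filter (fun p => pre p s), Win p s c := by
      simp only [Finset.sum_filter]
      rw [Finset.sum_comm]
    rw [h1, h2]
    exact Finset.sum_congr rfl fun s _ => hconservative s c
  calc ∑ p : P, M' p c
      = ∑ p : P, (M p c - (∑ s ∈ Tk.filter (fun s => pre p s), Win p s c)
          + (∑ s ∈ Tk.filter (fun s => post s p), Wout s p c)) :=
        Finset.sum_congr rfl fun p _ => hupd p c
    _ = (∑ p : P, (M p c - ∑ s ∈ Tk.filter (fun s => pre p s), Win p s c))
          + ∑ p : P, ∑ s ∈ Tk.filter (fun s => post s p), Wout s p c :=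
        Finset.sum_add_distrib
    _ = ((∑ p : P, M p c) - ∑ p : P, ∑ s ∈ Tk.filter (fun s => pre p s), Win p s c)
          + ∑ p : P, ∑ s ∈ Tk.filter (fun s => post s p), Wout s p c := by
        rw [Finset.sum_tsub_distrib Finset.univ (fun p _ => hcf p c)]
    _ = ∑ p : P, M p c := by
        rw [key]
        exact Nat.sub_add_cancel (Finset.sum_le_sum fun p _ => hcf p c)
end

section
/- In a timed colored Petri net, the total tokens of color c present in markings plus tokens 'in transit' (produced by fired transitions but not yet delivered) is conserved at every step if the net is conservative per transition. -/
/-- In a timed colored Petri net (durations `D t ≥ 1`, no reset arcs, conflict-free firing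
sets) that is conservative per transition, the total tokens of color `c` present in the
marking plus tokens "in transit" (produced by fired transitions but not yet delivered) is
conserved at every step.  A transition fired at time `l` consumes at step `l` and delivers
its output into the marking at time `l + D t`; it is in transit at observation time `k`
iff `l < k` and `l + D t ≥ k + 1`. -/
theorem timed_conservation {P T C : Type*} [Fintype P] [DecidableEq T]
    (Win : P → T → C → ℕ) (Wout : T → P → C → ℕ)
    (pre : P → T → Prop) [∀ p, DecidablePred (pre p)]
    (post : T → P → Prop) [∀ t, DecidablePred (post t)]
    (D : T → ℕ) (hD : ∀ t, 1 ≤ D t)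
    (hconservative : ∀ (t : T) (c : C),
      (∑ p ∈ Finset.univ.filter (fun p => post t p), Wout t p c)
        = ∑ p ∈ Finset.univ.filter (fun p => pre p t), Win p t c)
    (Tseq : ℕ → Finset T) (M : ℕ → P → C → ℕ)
    (hcf : ∀ k p c, (∑ t ∈ (Tseq k).filter (fun t => pre p t), Win p t c) ≤ M k p c)
    (hupd : ∀ k p c, M (k + 1) p c =
      M k p c - (∑ t ∈ (Tseq k).filter (fun t => pre p t), Win p t c)
        + ∑ l ∈ Finset.range (k + 1),
            ∑ t ∈ (Tseq l).filter (fun t => post t p ∧ l + D t = k + 1), Wout t p c) :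
    ∀ (k : ℕ) (c : C),
      (∑ p : P, M k p c)
        + (∑ l ∈ Finset.range k,
            ∑ t ∈ (Tseq l).filter (fun t => k + 1 ≤ l + D t),
              ∑ p ∈ Finset.univ.filter (fun p => post t p), Wout t p c)
      = ∑ p : P, M 0 p c := by
  intro k c
  induction k with
  | zero => simp
  | succ k ih =>
    -- marking balance
    have hM : (∑ p : P, M (k + 1) p c)
          + (∑ p : P, ∑ t ∈ (Tseq k).filter (fun t => pre p t), Win p t c)
        = (∑ p : P, M k p c)
          + ∑ p : P, ∑ l ∈ Finset.range (k + 1),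
              ∑ t ∈ (Tseq l).filter (fun t => post t p ∧ l + D t = k + 1), Wout t p c := by
      rw [← Finset.sum_add_distrib, ← Finset.sum_add_distrib]
      refine Finset.sum_congr rfl fun p _ => ?_
      have := hcf k p c
      rw [hupd k p c]
      omega
    -- swap the consumption sum and use conservativity
    have hOut : (∑ p : P, ∑ t ∈ (Tseq k).filter (fun t => pre p t), Win p t c)
        = ∑ t ∈ Tseq k, ∑ p ∈ Finset.univ.filter (fun p => post t p), Wout t p c := by
      simp only [Finset.sum_filter]
      rw [Finset.sum_comm]
      refine Finset.sum_congr rfl fun t _ => ?_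
      rw [← Finset.sum_filter, ← Finset.sum_filter, hconservative t c]
    -- swap the delivery sum
    have hIn : (∑ p : P, ∑ l ∈ Finset.range (k + 1),
            ∑ t ∈ (Tseq l).filter (fun t => post t p ∧ l + D t = k + 1), Wout t p c)
        = ∑ l ∈ Finset.range (k + 1), ∑ t ∈ (Tseq l).filter (fun t => l + D t = k + 1),
            ∑ p ∈ Finset.univ.filter (fun p => post t p), Wout t p c := by
      rw [Finset.sum_comm]
      refine Finset.sum_congr rfl fun l _ => ?_
      simp only [Finset.sum_filter]
      rw [Finset.sum_comm]
      refine Finset.sum_congr rfl fun t _ => ?_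
      by_cases h : l + D t = k + 1 <;> simp [h]
    -- transit balance
    have key : (∑ l ∈ Finset.range k, ∑ t ∈ (Tseq l).filter (fun t => k + 1 ≤ l + D t),
            ∑ p ∈ Finset.univ.filter (fun p => post t p), Wout t p c)
          + (∑ t ∈ Tseq k, ∑ p ∈ Finset.univ.filter (fun p => post t p), Wout t p c)
        = (∑ l ∈ Finset.range (k + 1),
              ∑ t ∈ (Tseq l).filter (fun t => k + 1 + 1 ≤ l + D t),
                ∑ p ∈ Finset.univ.filter (fun p => post t p), Wout t p c)
          + ∑ l ∈ Finset.range (k + 1), ∑ t ∈ (Tseq l).filter (fun t => l + D t = k + 1),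
              ∑ p ∈ Finset.univ.filter (fun p => post t p), Wout t p c := by
      have hlast : (∑ t ∈ Tseq k, ∑ p ∈ Finset.univ.filter (fun p => post t p), Wout t p c)
          = ∑ t ∈ (Tseq k).filter (fun t => k + 1 ≤ k + D t),
              ∑ p ∈ Finset.univ.filter (fun p => post t p), Wout t p c := by
        rw [Finset.filter_true_of_mem fun t _ => by have := hD t; omega]
      rw [hlast, ← Finset.sum_range_succ (fun l =>
        ∑ t ∈ (Tseq l).filter (fun t => k + 1 ≤ l + D t),
          ∑ p ∈ Finset.univ.filter (fun p => post t p), Wout t p c),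
        ← Finset.sum_add_distrib]
      refine Finset.sum_congr rfl fun l _ => ?_
      simp only [Finset.sum_filter]
      rw [← Finset.sum_add_distrib]
      refine Finset.sum_congr rfl fun t _ => ?_
      rcases Nat.lt_trichotomy (l + D t) (k + 1) with h | h | h
      · simp [Nat.not_le.2 h, Nat.ne_of_lt h, Nat.not_le.2 (Nat.lt_succ_of_lt h)]
      · simp [h]
      · have h2 : k + 1 + 1 ≤ l + D t := h
        simp [Nat.le_of_lt h, h2, Nat.ne_of_gt h]
    rw [hOut] at hM
    rw [hIn] at hM
    omega
end
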